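/- Let J be the tridiagonal n×n matrix with all off-diagonal entries equal to 1 and diagonal entries b_k, and suppose there exists u ∈ ℝ^n with (-1)^k u_k > 0 for all k and Ju = 0. Then J is positive semidefinite, and ⟨f∘u, J(f∘u)⟩ = -∑_{k=1}^{n-1} u_k u_{k+1}(f_{k+1}-f_k)^2 ≥ 0 for all f ∈ ℝ^n. -/

import Mathlib

open Matrix

/-- The tridiagonal (Jacobi) `n×n` matrix with off-diagonal entries
`a 0, …, a (n-2)` (`a k` coupling sites `k` and `k+1`) and diagonal `b`. -/
def jacobi (n : ℕ) (a b : ℕ → ℝ) : Matrix (Fin n) (Fin n) ℝ :=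
  Matrix.of fun i j =>
    if (j : ℕ) = (i : ℕ) + 1 then a i
    else if (i : ℕ) = (j : ℕ) + 1 then a j
    else if i = j then b i else 0

/-- ℕ-indexed version of the Jacobi matrix entries with off-diagonal 1. -/
noncomputable def Jc (b : ℕ → ℝ) (i j : ℕ) : ℝ :=
  if j = i + 1 then 1 else if i = j + 1 then 1 else if i = j then b i else 0

lemma jacobi_eq_Jc {n : ℕ} (b : ℕ → ℝ) (i j : Fin n) :
    jacobi n (fun _ => 1) b i j = Jc b i j := by
  simp only [jacobi, Jc, Matrix.of_apply, Fin.ext_iff]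

lemma row_sum {n : ℕ} (b w : ℕ → ℝ) {i : ℕ} (hi : i < n) :
    ∑ j ∈ Finset.range n, Jc b i j * w j =
      (if i + 1 < n then w (i + 1) else 0) +
      (if 1 ≤ i then w (i - 1) else 0) + b i * w i := by
  have hsplit : ∀ j, Jc b i j * w j =
      (if j = i + 1 then w j else 0) + (if 1 ≤ i ∧ j = i - 1 then w j else 0) +
        (if j = i then b i * w j else 0) := by
    intro j
    unfold Jc
    split_ifs <;> first | (exfalso; omega) | ring
  simp only [hsplit, Finset.sum_add_distrib]
  congr 1
  · congr 1
    · rw [Finset.sum_ite_eq' (Finset.range n) (i+1) w]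
      simp
    · by_cases h1 : 1 ≤ i
      · simp only [h1, true_and]
        rw [Finset.sum_ite_eq' (Finset.range n) (i-1) w]
        have : i - 1 ∈ Finset.range n := by simp; omega
        simp [this, h1]
      · simp [h1]
  · rw [Finset.sum_ite_eq' (Finset.range n) i (fun j => b i * w j)]
    simp [hi]

lemma quad_form {n : ℕ} (b f u : ℕ → ℝ) :
    (fun i : Fin n => f i * u i) ⬝ᵥ (jacobi n (fun _ => 1) b) *ᵥ
        (fun i : Fin n => f i * u i) =
      ∑ i ∈ Finset.range n,
        (f i * u i) * ∑ j ∈ Finset.range n, Jc b i j * (f j * u j) := by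
  simp only [dotProduct, Matrix.mulVec, jacobi_eq_Jc]
  rw [Fin.sum_univ_eq_sum_range
    (fun i => f i * u i * ∑ j : Fin n, Jc b i j * (f j * u j))]
  refine Finset.sum_congr rfl fun i hi => ?_
  rw [Fin.sum_univ_eq_sum_range (fun j => Jc b i j * (f j * u j))]

/-- Ground state representation at the bottom of the spectrum: an alternating
positive null vector of a Jacobi matrix with off-diagonals `1` yields positive
semidefiniteness of `+J`. -/
theorem jacobi_alternating_groundState {n : ℕ} (b : ℕ → ℝ)
    (u : ℕ → ℝ) (hu : ∀ k, k < n → 0 < (-1 : ℝ) ^ k * u k)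
    (hJu : jacobi n (fun _ => 1) b *ᵥ (fun i => u i) = 0) :
    (jacobi n (fun _ => 1) b).PosSemidef ∧
    ∀ f : ℕ → ℝ,
      (fun i : Fin n => f i * u i) ⬝ᵥ (jacobi n (fun _ => 1) b) *ᵥ
          (fun i : Fin n => f i * u i) =
        -∑ k ∈ Finset.range (n - 1), u k * u (k + 1) * (f (k + 1) - f k) ^ 2 ∧
      0 ≤ (fun i : Fin n => f i * u i) ⬝ᵥ (jacobi n (fun _ => 1) b) *ᵥ
          (fun i : Fin n => f i * u i) := by
  -- null vector equation in ℕ form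
  have hnull : ∀ i, i < n →
      (if i + 1 < n then u (i + 1) else 0) +
      (if 1 ≤ i then u (i - 1) else 0) + b i * u i = 0 := by
    intro i hi
    have h0 := congrFun hJu ⟨i, hi⟩
    simp only [Matrix.mulVec, dotProduct, jacobi_eq_Jc, Pi.zero_apply] at h0
    rw [Fin.sum_univ_eq_sum_range (fun j => Jc b i j * u j)] at h0
    rw [← row_sum b u hi]
    exact h0
  -- signs
  have hprod : ∀ k, k ∈ Finset.range (n - 1) → u k * u (k + 1) < 0 := by
    intro k hk
    rw [Finset.mem_range] at hk
    have h1 := hu k (by omega)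
    have h2 := hu (k + 1) (by omega)
    have hp : ((-1 : ℝ) ^ k) ^ 2 = 1 := by
      rw [← pow_mul, mul_comm, pow_mul]; norm_num
    rw [pow_succ] at h2
    nlinarith [mul_pos h1 h2]
  -- the main identity and nonnegativity
  have key : ∀ f : ℕ → ℝ,
      (fun i : Fin n => f i * u i) ⬝ᵥ (jacobi n (fun _ => 1) b) *ᵥ
          (fun i : Fin n => f i * u i) =
        -∑ k ∈ Finset.range (n - 1), u k * u (k + 1) * (f (k + 1) - f k) ^ 2 := by
    intro f
    rw [quad_form b f u]
    have hrow : ∀ i ∈ Finset.range n,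
        (fun i => (f i * u i) * ∑ j ∈ Finset.range n, Jc b i j * (f j * u j)) i =
        (if i + 1 < n then f i * u i * u (i + 1) * (f (i + 1) - f i) else 0) +
        (if 1 ≤ i then f i * u i * u (i - 1) * (f (i - 1) - f i) else 0) := by
      intro i hi
      rw [Finset.mem_range] at hi
      have h0 := hnull i hi
      simp only
      rw [row_sum b (fun j => f j * u j) hi]
      have hb : b i * u i = -((if i + 1 < n then u (i + 1) else 0) +
          (if 1 ≤ i then u (i - 1) else 0)) := by linarith
      have : b i * (f i * u i) = f i * (b i * u i) := by ring
      rw [this, hb]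
      split_ifs <;> ring
    rw [Finset.sum_congr rfl hrow, Finset.sum_add_distrib]
    -- first sum: over range (n-1)
    have e1 : ∑ i ∈ Finset.range n,
        (if i + 1 < n then f i * u i * u (i + 1) * (f (i + 1) - f i) else 0) =
        ∑ k ∈ Finset.range (n - 1), f k * u k * u (k + 1) * (f (k + 1) - f k) := by
      rw [← Finset.sum_filter]
      apply Finset.sum_congr
      · ext x; simp [Finset.mem_filter]; omega
      · intro x _; rfl
    -- second sum: reindex
    have e2 : ∑ i ∈ Finset.range n,
        (if 1 ≤ i then f i * u i * u (i - 1) * (f (i - 1) - f i) else 0) =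
        ∑ k ∈ Finset.range (n - 1),
          f (k + 1) * u (k + 1) * u k * (f k - f (k + 1)) := by
      rcases Nat.eq_zero_or_pos n with h | h
      · subst h; simp
      · have hn : n = (n - 1) + 1 := by omega
        rw [hn, Finset.sum_range_succ']
        simp
    rw [e1, e2, ← Finset.sum_neg_distrib, ← Finset.sum_add_distrib]
    apply Finset.sum_congr rfl
    intro k _
    ring
  have key2 : ∀ f : ℕ → ℝ,
      0 ≤ (fun i : Fin n => f i * u i) ⬝ᵥ (jacobi n (fun _ => 1) b) *ᵥ
          (fun i : Fin n => f i * u i) := by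
    intro f
    rw [key f, ← Finset.sum_neg_distrib]
    apply Finset.sum_nonneg
    intro k hk
    have := hprod k hk
    nlinarith [sq_nonneg (f (k + 1) - f k)]
  refine ⟨⟨?_, ?_⟩, fun f => ⟨key f, key2 f⟩⟩
  · -- Hermitian
    ext i j
    simp only [Matrix.conjTranspose_apply, jacobi, Matrix.of_apply, star_trivial]
    split_ifs with h1 h2 h3 h4 h5 h6 <;>
      first
        | rfl
        | (exfalso; omega)
        | exact (congrArg b (congrArg Fin.val h4)).symm
        | exact (congrArg b (congrArg Fin.val h5)).symm
  · -- quadratic form nonneg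
    intro x
    have hune : ∀ i : Fin n, u i ≠ 0 := by
      intro i h
      have := hu i i.isLt
      rw [h, mul_zero] at this
      exact lt_irrefl 0 this
    set f : ℕ → ℝ := fun k => if h : k < n then x ⟨k, h⟩ / u k else 0 with hf
    have hx : (fun i : Fin n => f i * u i) = x := by
      funext i
      simp only [hf, i.isLt, dif_pos]
      exact div_mul_cancel₀ _ (hune i)
    have := key2 f
    rw [hx] at this
    simpa [Finsupp.sum_fintype, dotProduct, mulVec, Finset.mul_sum, mul_assoc] using this
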